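/- Let $\phi : \mathcal{G} \to \mathcal{G}$ be holomorphic on a domain $\mathcal{G} \subseteq \mathbb{C}$ with fixed point $\xi_0$, $\phi(\xi_0) = \xi_0$, and multiplier $\lambda = \phi'(\xi_0)$ with $0 < \lambda < 1$. Then there exists a holomorphic function $\Psi$ on a neighborhood $\mathcal{U}$ of $\xi_0$ with $\Psi(\xi_0) = 0$, $\Psi'(\xi_0) = 1$, and $\Psi(\phi(\xi)) = \lambda \Psi(\xi)$ for all $\xi \in \mathcal{U}$ with $\phi(\xi) \in \mathcal{U}$. -/

import Mathlib

open Metric Filter Function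

set_option maxHeartbeats 1000000 in
theorem koenigs_linearization (G : Set ℂ) (hG : IsOpen G) (φ : ℂ → ℂ)
    (hφ : DifferentiableOn ℂ φ G) (hmaps : Set.MapsTo φ G G)
    (ξ₀ : ℂ) (hξ₀ : ξ₀ ∈ G) (hfix : φ ξ₀ = ξ₀)
    (l : ℝ) (hl : 0 < l) (hl' : l < 1) (hder : HasDerivAt φ (l : ℂ) ξ₀) :
    ∃ U ∈ nhds ξ₀, ∃ Ψ : ℂ → ℂ, DifferentiableOn ℂ Ψ U ∧ Ψ ξ₀ = 0 ∧
      HasDerivAt Ψ 1 ξ₀ ∧ ∀ ξ ∈ U, φ ξ ∈ U → Ψ (φ ξ) = (l : ℂ) * Ψ ξ := by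
  classical
  -- the quadratic error function
  set g : ℂ → ℂ := fun ξ => φ ξ - ξ₀ - (l : ℂ) * (ξ - ξ₀) with hg_def
  have hgξ₀ : g ξ₀ = 0 := by simp [hg_def, hfix]
  have hgder : HasDerivAt g 0 ξ₀ := by
    have h1 : HasDerivAt (fun ξ : ℂ => (l : ℂ) * (ξ - ξ₀)) (l : ℂ) ξ₀ := by
      simpa using ((hasDerivAt_id ξ₀).sub_const ξ₀).const_mul (l : ℂ)
    have h2 := (hder.sub_const ξ₀).sub h1
    rw [sub_self] at h2
    exact h2
  have hganalytic : AnalyticAt ℂ g ξ₀ := by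
    have h1 : AnalyticAt ℂ φ ξ₀ := hφ.analyticAt (hG.mem_nhds hξ₀)
    exact (h1.sub analyticAt_const).sub
      (analyticAt_const.mul ((analyticAt_id).sub analyticAt_const))
  obtain ⟨p, hp⟩ := hganalytic
  set h : ℂ → ℂ := dslope (dslope g ξ₀) ξ₀ with hh_def
  have hhanalytic : AnalyticAt ℂ h ξ₀ :=
    ⟨_, hp.has_fpower_series_dslope_fslope.has_fpower_series_dslope_fslope⟩
  have hkey : ∀ ξ, g ξ = (ξ - ξ₀) ^ 2 * h ξ := by
    intro ξ
    have e1 := sub_smul_dslope g ξ₀ ξ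
    have e2 := sub_smul_dslope (dslope g ξ₀) ξ₀ ξ
    have e3 : dslope g ξ₀ ξ₀ = 0 := by rw [dslope_same]; exact hgder.deriv
    rw [smul_eq_mul] at e1 e2
    rw [e3, sub_zero] at e2
    rw [hgξ₀, sub_zero] at e1
    change (ξ - ξ₀) * h ξ = dslope g ξ₀ ξ at e2
    rw [← e1, ← e2]; ring
  set M : ℝ := ‖h ξ₀‖ + 1 with hM_def
  have hM : 0 < M := by positivity
  have hev : ∀ᶠ ξ in nhds ξ₀, ‖h ξ‖ ≤ M := by
    have hc : ContinuousAt (fun ξ => ‖h ξ‖) ξ₀ := hhanalytic.continuousAt.norm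
    have hlt : ‖h ξ₀‖ < M := by rw [hM_def]; linarith
    have := hc.eventually_lt (continuousAt_const (y := M)) hlt
    exact this.mono fun ξ hξ => le_of_lt hξ
  obtain ⟨r1, hr1pos, hr1⟩ :=
    Metric.eventually_nhds_iff_ball.mp (hev.and (hG.eventually_mem hξ₀))
  set r : ℝ := min (r1 / 2) ((l - l ^ 2) / (4 * M)) with hr_def
  have hll : 0 < l - l ^ 2 := by nlinarith
  have hrpos : 0 < r := lt_min (by positivity) (by positivity)
  have hrball : Metric.closedBall ξ₀ r ⊆ Metric.ball ξ₀ r1 := by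
    apply Metric.closedBall_subset_ball
    calc r ≤ r1 / 2 := min_le_left _ _
      _ < r1 := by linarith
  have hDG : Metric.closedBall ξ₀ r ⊆ G := fun ξ hξ => (hr1 ξ (hrball hξ)).2
  have hMr : M * r ≤ (l - l ^ 2) / 4 := by
    have h2 : r ≤ (l - l ^ 2) / (4 * M) := min_le_right _ _
    rw [le_div_iff₀ (by positivity : (0:ℝ) < 4 * M)] at h2
    nlinarith
  set ρ : ℝ := l + M * r with hρ_def
  have hρpos : 0 < ρ := by positivity
  have hρ2 : ρ ^ 2 < l := by
    rw [hρ_def]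
    have hx : 0 ≤ M * r := by positivity
    have hx1 : M * r ≤ 1 := by nlinarith
    have hxsq : (M * r) ^ 2 ≤ M * r := by nlinarith
    nlinarith
  have hρ1 : ρ < 1 := by nlinarith [hρ2, hρpos, sq_nonneg (ρ - 1)]
  have hgb : ∀ ξ ∈ Metric.closedBall ξ₀ r, ‖g ξ‖ ≤ M * ‖ξ - ξ₀‖ ^ 2 := by
    intro ξ hξ
    have hhb : ‖h ξ‖ ≤ M := (hr1 ξ (hrball hξ)).1
    calc ‖g ξ‖ = ‖ξ - ξ₀‖ ^ 2 * ‖h ξ‖ := by rw [hkey ξ, norm_mul, norm_pow]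
      _ ≤ ‖ξ - ξ₀‖ ^ 2 * M := by
          exact mul_le_mul_of_nonneg_left hhb (by positivity)
      _ = M * ‖ξ - ξ₀‖ ^ 2 := by ring
  have hlnorm : ‖(l : ℂ)‖ = l := by
    rw [Complex.norm_real, Real.norm_of_nonneg hl.le]
  have hcontr : ∀ ξ ∈ Metric.closedBall ξ₀ r, ‖φ ξ - ξ₀‖ ≤ ρ * ‖ξ - ξ₀‖ := by
    intro ξ hξ
    have hd : ‖ξ - ξ₀‖ ≤ r := by rwa [Metric.mem_closedBall, Complex.dist_eq] at hξ
    have hsplit : φ ξ - ξ₀ = g ξ + (l : ℂ) * (ξ - ξ₀) := by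
      simp only [hg_def]; ring
    have hgξ := hgb ξ hξ
    calc ‖φ ξ - ξ₀‖ = ‖g ξ + (l : ℂ) * (ξ - ξ₀)‖ := by rw [hsplit]
      _ ≤ ‖g ξ‖ + ‖(l : ℂ) * (ξ - ξ₀)‖ := norm_add_le _ _
      _ = ‖g ξ‖ + l * ‖ξ - ξ₀‖ := by rw [norm_mul, hlnorm]
      _ ≤ ρ * ‖ξ - ξ₀‖ := by
          rw [hρ_def]
          nlinarith [norm_nonneg (ξ - ξ₀), hM.le, hgξ, hd,
            mul_le_mul_of_nonneg_left hd (mul_nonneg hM.le (norm_nonneg (ξ - ξ₀)))]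
  have hmapsD : Set.MapsTo φ (Metric.closedBall ξ₀ r) (Metric.closedBall ξ₀ r) := by
    intro ξ hξ
    have hd : ‖ξ - ξ₀‖ ≤ r := by rwa [Metric.mem_closedBall, Complex.dist_eq] at hξ
    rw [Metric.mem_closedBall, Complex.dist_eq]
    calc ‖φ ξ - ξ₀‖ ≤ ρ * ‖ξ - ξ₀‖ := hcontr ξ hξ
      _ ≤ ρ * r := mul_le_mul_of_nonneg_left hd hρpos.le
      _ ≤ 1 * r := mul_le_mul_of_nonneg_right hρ1.le hrpos.le
      _ = r := one_mul r
  have hiter : ∀ n, ∀ ξ ∈ Metric.closedBall ξ₀ r,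
      φ^[n] ξ ∈ Metric.closedBall ξ₀ r ∧ ‖φ^[n] ξ - ξ₀‖ ≤ ρ ^ n * r := by
    intro n
    induction n with
    | zero =>
        intro ξ hξ
        refine ⟨by simpa using hξ, ?_⟩
        simpa using (by rwa [Metric.mem_closedBall, Complex.dist_eq] at hξ : ‖ξ - ξ₀‖ ≤ r)
    | succ n ih =>
        intro ξ hξ
        obtain ⟨h1, h2⟩ := ih ξ hξ
        rw [Function.iterate_succ_apply']
        refine ⟨hmapsD h1, ?_⟩
        calc ‖φ (φ^[n] ξ) - ξ₀‖ ≤ ρ * ‖φ^[n] ξ - ξ₀‖ := hcontr _ h1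
          _ ≤ ρ * (ρ ^ n * r) := mul_le_mul_of_nonneg_left h2 hρpos.le
          _ = ρ ^ (n + 1) * r := by ring
  set F : ℕ → ℂ → ℂ := fun n ξ => (φ^[n] ξ - ξ₀) / (l : ℂ) ^ n with hF_def
  have hlC : (l : ℂ) ≠ 0 := by
    exact_mod_cast hl.ne'
  set δF : ℕ → ℂ → ℂ := fun n ξ => F (n + 1) ξ - F n ξ with hδ_def
  set u : ℕ → ℝ := fun n => M * r ^ 2 / l * (ρ ^ 2 / l) ^ n with hu_def
  have hq : ρ ^ 2 / l < 1 := (div_lt_one hl).mpr hρ2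
  have hqnn : (0:ℝ) ≤ ρ ^ 2 / l := by positivity
  have hu_sum : Summable u := (summable_geometric_of_lt_one hqnn hq).mul_left _
  have hδbound : ∀ n ξ, ξ ∈ Metric.closedBall ξ₀ r → ‖δF n ξ‖ ≤ u n := by
    intro n ξ hξ
    obtain ⟨h1, h2⟩ := hiter n ξ hξ
    have key : δF n ξ = g (φ^[n] ξ) / (l : ℂ) ^ (n + 1) := by
      have hgi : g (φ^[n] ξ) = φ^[n + 1] ξ - ξ₀ - (l : ℂ) * (φ^[n] ξ - ξ₀) := by
        simp only [hg_def, Function.iterate_succ_apply']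
      simp only [hδ_def, hF_def, hgi, pow_succ]
      have hln : (l : ℂ) ^ n ≠ 0 := pow_ne_zero n hlC
      field_simp
    have hn1 : ‖(l : ℂ) ^ (n + 1)‖ = l ^ (n + 1) := by
      rw [norm_pow, hlnorm]
    have hg2 : ‖g (φ^[n] ξ)‖ ≤ M * (ρ ^ n * r) ^ 2 := by
      refine le_trans (hgb _ h1) ?_
      have hnn := norm_nonneg (φ^[n] ξ - ξ₀)
      have hsq : ‖φ^[n] ξ - ξ₀‖ ^ 2 ≤ (ρ ^ n * r) ^ 2 := by nlinarith
      nlinarith [hM.le]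
    calc ‖δF n ξ‖ = ‖g (φ^[n] ξ)‖ / l ^ (n + 1) := by rw [key, norm_div, hn1]
      _ ≤ M * (ρ ^ n * r) ^ 2 / l ^ (n + 1) :=
          (div_le_div_iff_of_pos_right (by positivity)).mpr hg2
      _ = u n := by
          simp only [hu_def]
          rw [mul_pow, div_pow, ← pow_mul, ← pow_mul, mul_comm n 2, pow_succ,
            div_mul_div_comm, div_eq_div_iff (by positivity) (by positivity)]
          ring
  have hTsum := tendstoUniformlyOn_tsum_nat hu_sum hδbound (s := Metric.closedBall ξ₀ r)
  set Ψ : ℂ → ℂ := fun ξ => (ξ - ξ₀) + ∑' n, δF n ξ with hΨ_def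
  have hpartial : ∀ n ξ, F n ξ = (ξ - ξ₀) + ∑ k ∈ Finset.range n, δF k ξ := by
    intro n ξ
    have ht := Finset.sum_range_sub (fun k => F k ξ) n
    have hF0 : F 0 ξ = ξ - ξ₀ := by simp [hF_def]
    simp only [hδ_def]
    rw [ht, hF0]; ring
  have hconst : TendstoUniformlyOn (fun (_ : ℕ) ξ => ξ - ξ₀) (fun ξ => ξ - ξ₀) atTop
      (Metric.closedBall ξ₀ r) := by
    rw [Metric.tendstoUniformlyOn_iff]
    intro ε hε
    filter_upwards with n ξ hξ
    simpa using hε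
  have hTU : TendstoUniformlyOn F Ψ atTop (Metric.closedBall ξ₀ r) := by
    refine (hconst.add hTsum).congr ?_
    filter_upwards with n ξ hξ
    exact (hpartial n ξ).symm
  have hiterDiff : ∀ n, DifferentiableOn ℂ (φ^[n]) (Metric.closedBall ξ₀ r) := by
    intro n
    induction n with
    | zero => simpa using differentiableOn_id
    | succ n ih =>
        rw [Function.iterate_succ']
        exact hφ.comp ih fun ξ hξ => hDG (hiter n ξ hξ).1
  have hFDiff : ∀ n, DifferentiableOn ℂ (F n) (Metric.closedBall ξ₀ r) := by
    intro n
    exact ((hiterDiff n).sub (differentiableOn_const _)).div_const _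
  have hTLU : TendstoLocallyUniformlyOn F Ψ atTop (Metric.ball ξ₀ r) :=
    (hTU.mono Metric.ball_subset_closedBall).tendstoLocallyUniformlyOn
  have hFDiffB : ∀ᶠ n in atTop, DifferentiableOn ℂ (F n) (Metric.ball ξ₀ r) := by
    filter_upwards with n
    exact (hFDiff n).mono Metric.ball_subset_closedBall
  have hΨdiff : DifferentiableOn ℂ Ψ (Metric.ball ξ₀ r) :=
    hTLU.differentiableOn hFDiffB Metric.isOpen_ball
  have hξ₀ball : ξ₀ ∈ Metric.ball ξ₀ r := Metric.mem_ball_self hrpos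
  have hΨ0 : Ψ ξ₀ = 0 := by
    have hz : ∀ n, δF n ξ₀ = 0 := by
      intro n
      have hfixn : ∀ m, φ^[m] ξ₀ = ξ₀ := fun m => Function.iterate_fixed hfix m
      simp [hδ_def, hF_def, hfix, hfixn]
    simp [hΨ_def, hz, tsum_zero]
  have hFd : ∀ n, HasDerivAt (φ^[n]) ((l : ℂ) ^ n) ξ₀ := by
    intro n
    induction n with
    | zero => simpa using hasDerivAt_id ξ₀
    | succ n ih =>
        have hfixn : φ^[n] ξ₀ = ξ₀ := Function.iterate_fixed hfix n
        have hd : HasDerivAt φ (l : ℂ) (φ^[n] ξ₀) := by rw [hfixn]; exact hder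
        have := HasDerivAt.comp ξ₀ hd ih
        rw [Function.iterate_succ']
        convert this using 1
        exacts [rfl, rfl, by ring]
  have hFd1 : ∀ n, HasDerivAt (F n) 1 ξ₀ := by
    intro n
    have h2 : (l : ℂ) ^ n / (l : ℂ) ^ n = 1 := div_self (pow_ne_zero n hlC)
    have := ((hFd n).sub_const ξ₀).div_const ((l : ℂ) ^ n)
    rw [h2] at this
    exact this
  have hderΨ : TendstoLocallyUniformlyOn (deriv ∘ F) (deriv Ψ) atTop (Metric.ball ξ₀ r) :=
    hTLU.deriv hFDiffB Metric.isOpen_ball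
  have htend : Tendsto (fun n => deriv (F n) ξ₀) atTop (nhds (deriv Ψ ξ₀)) :=
    hderΨ.tendsto_at hξ₀ball
  have hconst1 : ∀ n, deriv (F n) ξ₀ = 1 := fun n => (hFd1 n).deriv
  have hderiv1 : deriv Ψ ξ₀ = 1 := by
    simp only [hconst1] at htend
    exact tendsto_nhds_unique htend tendsto_const_nhds
  have hΨder : HasDerivAt Ψ 1 ξ₀ := by
    have hd := (hΨdiff.differentiableAt (Metric.isOpen_ball.mem_nhds hξ₀ball)).hasDerivAt
    rwa [hderiv1] at hd
  refine ⟨Metric.ball ξ₀ r, Metric.ball_mem_nhds ξ₀ hrpos, Ψ, hΨdiff, hΨ0, hΨder, ?_⟩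
  intro ξ hξ hφξ
  have hptw : ∀ ζ ∈ Metric.closedBall ξ₀ r, Tendsto (fun n => F n ζ) atTop (nhds (Ψ ζ)) :=
    fun ζ hζ => hTU.tendsto_at hζ
  have h1 : Tendsto (fun n => F n (φ ξ)) atTop (nhds (Ψ (φ ξ))) :=
    hptw _ (Metric.ball_subset_closedBall hφξ)
  have h2 : Tendsto (fun n => (l : ℂ) * F (n + 1) ξ) atTop (nhds ((l : ℂ) * Ψ ξ)) :=
    ((hptw ξ (Metric.ball_subset_closedBall hξ)).comp (tendsto_add_atTop_nat 1)).const_mul _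
  have heq : ∀ n, F n (φ ξ) = (l : ℂ) * F (n + 1) ξ := by
    intro n
    simp only [hF_def, ← Function.iterate_succ_apply, pow_succ]
    field_simp
  simp only [heq] at h1
  exact tendsto_nhds_unique h1 h2
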